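/- arXiv:1409.2196 — 2 statements merged into one kernel-verified Lean document; each statement's English description precedes it below -/
import Mathlib

section
/- Let u, ω : [0,1] → ℝ be continuous with u(r)·ω(r) > 0 for all r ∈ [0,1]. Suppose φ : [0,1] → ℝ is a nonzero C² function with φ(0) = 0, φ(1) = 0, satisfying d/dr((1/r)φ'(r)) - (n²/r)φ(r) = (2C·u(r)·ω(r)/r)·φ(r) on (0,1) for some constant C and integer n, and that (1/r)φ'(r)φ(r) → 0 as r → 0⁺. Then C < 0. -/
open Set Filter

/-- Eigenvalues of the singular Sturm–Liouville problem are strictly negative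
when `u·ω > 0`. -/
theorem sturm_liouville_eigenvalue_negative
    (u ω : ℝ → ℝ) (hu : ContinuousOn u (Icc 0 1)) (hω : ContinuousOn ω (Icc 0 1))
    (hpos : ∀ r ∈ Icc (0:ℝ) 1, 0 < u r * ω r)
    (n : ℤ) (C : ℝ) (φ : ℝ → ℝ) (hφ : ContDiff ℝ 2 φ)
    (hφne : ∃ r ∈ Icc (0:ℝ) 1, φ r ≠ 0)
    (hφ0 : φ 0 = 0) (hφ1 : φ 1 = 0)
    (hODE : ∀ r ∈ Ioo (0:ℝ) 1,
      deriv (fun s => (1 / s) * deriv φ s) r - ((n : ℝ) ^ 2 / r) * φ r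
        = (2 * C * u r * ω r / r) * φ r)
    (hlim : Tendsto (fun r => (1 / r) * deriv φ r * φ r)
      (nhdsWithin 0 (Ioi 0)) (nhds 0)) :
    C < 0 := by
  by_contra hC
  push_neg at hC
  -- φ is differentiable, and so is its derivative
  have hφ1' : ContDiff ℝ 1 (deriv φ) := by
    have h2 : ContDiff ℝ ((1 : ℕ) + 1) φ := by exact_mod_cast hφ
    exact (contDiff_succ_iff_deriv.mp h2).2.2
  have hφd : Differentiable ℝ φ := hφ.differentiable (by norm_num)
  have hφd' : Differentiable ℝ (deriv φ) := hφ1'.differentiable (by norm_num)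
  set g : ℝ → ℝ := fun s => (1 / s) * deriv φ s with hg_def
  set F : ℝ → ℝ := fun s => (1 / s) * deriv φ s * φ s with hF_def
  have hgdiff : ∀ r : ℝ, r ≠ 0 → DifferentiableAt ℝ g r := by
    intro r hr
    exact ((differentiableAt_const (1:ℝ)).div differentiableAt_id hr).mul (hφd' r)
  have hFdiff : ∀ r : ℝ, r ≠ 0 → DifferentiableAt ℝ F r := by
    intro r hr
    exact (hgdiff r hr).mul (hφd r)
  -- derivative of F
  have hF' : ∀ r ∈ Ioo (0:ℝ) 1,
      HasDerivAt F ((((n : ℝ) ^ 2 / r) + 2 * C * u r * ω r / r) * (φ r) ^ 2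
        + (1 / r) * (deriv φ r) ^ 2) r := by
    intro r hr
    have hr0 : r ≠ 0 := ne_of_gt hr.1
    have h1 : HasDerivAt F (deriv g r * φ r + g r * deriv φ r) r :=
      ((hgdiff r hr0).hasDerivAt).mul (hφd r).hasDerivAt
    have h2 : deriv g r = ((n : ℝ) ^ 2 / r) * φ r + (2 * C * u r * ω r / r) * φ r := by
      have := hODE r hr
      linarith [this]
    rw [h2] at h1
    convert h1 using 1
    simp only [hg_def]
    ring
  -- F is monotone on (0,1]
  have hmono : MonotoneOn F (Ioc 0 1) := by
    apply monotoneOn_of_deriv_nonneg (convex_Ioc 0 1)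
    · intro x hx
      exact (hFdiff x (ne_of_gt hx.1)).continuousAt.continuousWithinAt
    · rw [interior_Ioc]
      intro x hx
      exact (hFdiff x (ne_of_gt hx.1)).differentiableWithinAt
    · rw [interior_Ioc]
      intro x hx
      rw [(hF' x hx).deriv]
      have hx01 : x ∈ Icc (0:ℝ) 1 := ⟨hx.1.le, hx.2.le⟩
      have h1 : (0:ℝ) ≤ (n : ℝ) ^ 2 / x := div_nonneg (sq_nonneg _) hx.1.le
      have h2 : (0:ℝ) ≤ 2 * C * u x * ω x / x := by
        apply div_nonneg _ hx.1.le
        nlinarith [hpos x hx01]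
      have h3 : (0:ℝ) ≤ 1 / x := le_of_lt (div_pos one_pos hx.1)
      nlinarith [sq_nonneg (φ x), sq_nonneg (deriv φ x)]
  have hF1 : F 1 = 0 := by simp [hF_def, hφ1]
  -- F vanishes on (0,1)
  have hFzero : ∀ r ∈ Ioo (0:ℝ) 1, F r = 0 := by
    intro r hr
    have hle : F r ≤ 0 := by
      have := hmono (⟨hr.1, hr.2.le⟩ : r ∈ Ioc (0:ℝ) 1) (⟨one_pos, le_rfl⟩ : (1:ℝ) ∈ Ioc (0:ℝ) 1) hr.2.le
      linarith [hF1 ▸ this]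
    have hge : 0 ≤ F r := by
      apply le_of_tendsto hlim
      filter_upwards [Ioo_mem_nhdsGT_of_mem (⟨le_rfl, hr.1⟩ : (0:ℝ) ∈ Ico 0 r)] with s hs
      exact hmono ⟨hs.1, (hs.2.trans hr.2).le⟩ ⟨hr.1, hr.2.le⟩ hs.2.le
    linarith
  -- hence deriv φ = 0 on (0,1)
  have hderiv0 : ∀ r ∈ Ioo (0:ℝ) 1, deriv φ r = 0 := by
    intro r hr
    have hEq : F =ᶠ[nhds r] (fun _ => 0) := by
      filter_upwards [isOpen_Ioo.mem_nhds hr] with s hs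
      exact hFzero s hs
    have hd0 : deriv F r = 0 := by
      rw [hEq.deriv_eq]; simp
    have hv := (hF' r hr).deriv
    rw [hd0] at hv
    have hx01 : r ∈ Icc (0:ℝ) 1 := ⟨hr.1.le, hr.2.le⟩
    have h1 : (0:ℝ) ≤ (n : ℝ) ^ 2 / r := div_nonneg (sq_nonneg _) hr.1.le
    have h2 : (0:ℝ) ≤ 2 * C * u r * ω r / r := by
      apply div_nonneg _ hr.1.le
      nlinarith [hpos r hx01]
    have h3 : (0:ℝ) < 1 / r := div_pos one_pos hr.1
    have h4 : (1 / r) * (deriv φ r) ^ 2 = 0 := by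
      nlinarith [sq_nonneg (φ r), sq_nonneg (deriv φ r)]
    have h5 : (deriv φ r) ^ 2 = 0 := by
      rcases mul_eq_zero.mp h4 with h | h
      · exact absurd h (ne_of_gt h3)
      · exact h
    exact pow_eq_zero_iff (by norm_num) |>.mp h5
  -- hence φ = 0 on (0,1)
  have hφzero : ∀ r ∈ Ioo (0:ℝ) 1, φ r = 0 := by
    intro r hr
    have hconst : ∀ x ∈ Icc r 1, φ x = φ r := by
      apply constant_of_derivWithin_zero (hφd.differentiableOn)
      intro x hx
      have hx' : x ∈ Ioo (0:ℝ) 1 := ⟨hr.1.trans_le hx.1, hx.2⟩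
      rw [(hφd x).derivWithin
        (uniqueDiffOn_Icc (hr.2) x ⟨hx.1, hx.2.le⟩)]
      exact hderiv0 x hx'
    have := hconst 1 ⟨hr.2.le, le_rfl⟩
    rw [hφ1] at this
    exact this.symm
  obtain ⟨r, hr, hne⟩ := hφne
  rcases eq_or_lt_of_le hr.1 with h0 | h0
  · exact hne (h0 ▸ hφ0)
  rcases eq_or_lt_of_le hr.2 with h1 | h1
  · exact hne (h1 ▸ hφ1)
  exact hne (hφzero r ⟨h0, h1⟩)
end

section
/- Suppose F : [0,1] → ℝ is continuous with F(r) > 0 on (0,1]. Then the quadratic form Q(g) = ∫₀¹ (1/r)|g(r)|² F(r) dr on C¹ functions g vanishing at 0 satisfies: Q(g) = 0 implies g ≡ 0, but for g_k(r) = sin(kπr)/k the ratio Q(g_k)/∫₀¹((1/r)|g_k|² + |g_k'|²)dr → 0 as k → ∞, provided F is bounded. -/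
open Set Real Filter

lemma sin_sq_le_of_nonneg {x : ℝ} (hx : 0 ≤ x) : Real.sin x ^ 2 ≤ x := by
  have h1 : |Real.sin x| ≤ 1 := Real.abs_sin_le_one x
  have h2 : |Real.sin x| ≤ x := by
    simpa [abs_of_nonneg hx] using Real.abs_sin_le_abs (x := x)
  calc Real.sin x ^ 2 = |Real.sin x| * |Real.sin x| := by
        rw [← sq_abs, sq]
    _ ≤ 1 * x := mul_le_mul h1 h2 (abs_nonneg _) zero_le_one
    _ = x := one_mul x

lemma cos_sq_integral (k : ℕ) (hk : k ≠ 0) :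
    (∫ r in (0:ℝ)..1, Real.cos (k * π * r) ^ 2) = 1 / 2 := by
  have hc : ((k:ℝ) * π) ≠ 0 := by
    have := Real.pi_pos
    have : (0:ℝ) < k := by exact_mod_cast Nat.pos_of_ne_zero hk
    positivity
  have := intervalIntegral.integral_comp_mul_left (a := (0:ℝ)) (b := 1)
    (fun x => Real.cos x ^ 2) hc
  rw [this]
  rw [integral_cos_sq]
  simp [Real.sin_nat_mul_pi, smul_eq_mul]
  field_simp

lemma deriv_sin_div (k : ℕ) (hk : k ≠ 0) (r : ℝ) :
    deriv (fun s => Real.sin (k * π * s) / k) r = π * Real.cos (k * π * r) := by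
  have hk' : (k:ℝ) ≠ 0 := Nat.cast_ne_zero.mpr hk
  have h : HasDerivAt (fun s => Real.sin (k * π * s) / k)
      (Real.cos (k * π * r) * ((k:ℝ) * π * 1) / k) r :=
    (((hasDerivAt_id r).const_mul ((k:ℝ) * π)).sin).div_const k
  rw [h.deriv]
  field_simp

lemma weight_integrable (k : ℕ) (hk : k ≠ 0) :
    IntervalIntegrable (fun r => (1 / r) * (Real.sin (k * π * r) / k) ^ 2)
      MeasureTheory.volume 0 1 := by
  rw [intervalIntegrable_iff_integrableOn_Ioc_of_le (by norm_num)]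
  have hk' : (0:ℝ) < k := by exact_mod_cast Nat.pos_of_ne_zero hk
  apply MeasureTheory.Integrable.mono'
    (g := fun _ => π / k) (MeasureTheory.integrable_const _)
  · apply MeasureTheory.AEStronglyMeasurable.restrict
    apply Measurable.aestronglyMeasurable
    fun_prop
  · filter_upwards [MeasureTheory.ae_restrict_mem measurableSet_Ioc] with r hr
    have hr0 : 0 < r := hr.1
    have hsin : Real.sin (k * π * r) ^ 2 ≤ k * π * r := by
      apply sin_sq_le_of_nonneg; positivity
    have hnn : 0 ≤ (1 / r) * (Real.sin (k * π * r) / k) ^ 2 := by positivity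
    rw [Real.norm_eq_abs, abs_of_nonneg hnn]
    have : (1 / r) * (Real.sin (k * π * r) / k) ^ 2
        = Real.sin (k * π * r) ^ 2 * (1 / (r * k ^ 2)) := by
      field_simp
    rw [this]
    calc Real.sin (k * π * r) ^ 2 * (1 / (r * k ^ 2))
        ≤ (k * π * r) * (1 / (r * k ^ 2)) := by
          apply mul_le_mul_of_nonneg_right hsin; positivity
      _ = π / k := by field_simp

lemma weight_le (k : ℕ) (hk : k ≠ 0) {r : ℝ} (hr0 : 0 < r) :
    (1 / r) * (Real.sin (k * π * r) / k) ^ 2 ≤ π / k := by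
  have hk' : (0:ℝ) < k := by exact_mod_cast Nat.pos_of_ne_zero hk
  have hsin : Real.sin (k * π * r) ^ 2 ≤ k * π * r := by
    apply sin_sq_le_of_nonneg; positivity
  have h1 : (1 / r) * (Real.sin (k * π * r) / k) ^ 2
      = Real.sin (k * π * r) ^ 2 * (1 / (r * k ^ 2)) := by
    field_simp
  rw [h1]
  calc Real.sin (k * π * r) ^ 2 * (1 / (r * k ^ 2))
      ≤ (k * π * r) * (1 / (r * k ^ 2)) := by
        apply mul_le_mul_of_nonneg_right hsin; positivity
    _ = π / k := by field_simp

lemma denom_ge (k : ℕ) (hk : k ≠ 0) :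
    π ^ 2 / 2 ≤ ∫ r in (0:ℝ)..1, ((1 / r) * (Real.sin (k * π * r) / k) ^ 2
      + (deriv (fun s => Real.sin (k * π * s) / k) r) ^ 2) := by
  have heq : (fun r => (1 / r) * (Real.sin (k * π * r) / k) ^ 2
      + (deriv (fun s => Real.sin (k * π * s) / k) r) ^ 2)
      = fun r => (1 / r) * (Real.sin (k * π * r) / k) ^ 2
      + π ^ 2 * Real.cos (k * π * r) ^ 2 := by
    funext r; rw [deriv_sin_div k hk]; ring
  rw [heq]
  have hcont : Continuous fun r : ℝ => π ^ 2 * Real.cos (k * π * r) ^ 2 := by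
    fun_prop
  rw [intervalIntegral.integral_add (weight_integrable k hk)
    (hcont.intervalIntegrable 0 1)]
  rw [intervalIntegral.integral_const_mul, cos_sq_integral k hk]
  have hA : 0 ≤ ∫ r in (0:ℝ)..1, (1 / r) * (Real.sin (k * π * r) / k) ^ 2 := by
    apply intervalIntegral.integral_nonneg (by norm_num)
    intro u hu
    have : 0 ≤ 1 / u := by
      rcases eq_or_lt_of_le hu.1 with h | h
      · simp [← h]
      · positivity
    positivity
  nlinarith [Real.pi_pos]

lemma num_bound (F : ℝ → ℝ) (M : ℝ) (hM : ∀ r ∈ Icc (0:ℝ) 1, |F r| ≤ M)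
    (k : ℕ) (hk : k ≠ 0) :
    |∫ r in (0:ℝ)..1, (1 / r) * (Real.sin (k * π * r) / k) ^ 2 * F r| ≤ π * M / k := by
  have hk' : (0:ℝ) < k := by exact_mod_cast Nat.pos_of_ne_zero hk
  have hM0 : 0 ≤ M := le_trans (abs_nonneg _) (hM 1 ⟨by norm_num, le_refl 1⟩)
  have := intervalIntegral.norm_integral_le_of_norm_le_const
    (a := (0:ℝ)) (b := 1) (C := π / k * M)
    (f := fun r => (1 / r) * (Real.sin (k * π * r) / k) ^ 2 * F r) ?_
  · rw [Real.norm_eq_abs] at this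
    calc |∫ r in (0:ℝ)..1, (1 / r) * (Real.sin (k * π * r) / k) ^ 2 * F r|
        ≤ π / k * M * |1 - 0| := this
      _ = π * M / k := by rw [abs_of_nonneg (by norm_num : (0:ℝ) ≤ 1 - 0)]; ring
  · intro x hx
    rw [Set.uIoc_of_le (by norm_num : (0:ℝ) ≤ 1)] at hx
    have hx0 : 0 < x := hx.1
    rw [Real.norm_eq_abs, abs_mul]
    have hnn : 0 ≤ (1 / x) * (Real.sin (k * π * x) / k) ^ 2 := by positivity
    rw [abs_of_nonneg hnn]
    exact mul_le_mul (weight_le k hk hx0) (hM x ⟨le_of_lt hx0, hx.2⟩)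
      (abs_nonneg _) (by positivity)

/-- The weighted quadratic form `Q(g) = ∫₀¹ (1/r)|g|² F` is definite on C¹ functions
vanishing at 0, yet for `g_k(r) = sin(kπr)/k` the ratio of `Q(g_k)` to the H¹-type
denominator tends to 0, provided `F` is bounded. -/
theorem curvature_not_bounded_below
    (F : ℝ → ℝ) (hFc : ContinuousOn F (Icc 0 1))
    (hFpos : ∀ r ∈ Ioc (0:ℝ) 1, 0 < F r)
    (hFbdd : ∃ M : ℝ, ∀ r ∈ Icc (0:ℝ) 1, |F r| ≤ M) :
    (∀ g : ℝ → ℝ, ContDiff ℝ 1 g → g 0 = 0 →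
      IntervalIntegrable (fun r => (1 / r) * g r ^ 2 * F r) MeasureTheory.volume 0 1 →
      (∫ r in (0:ℝ)..1, (1 / r) * g r ^ 2 * F r) = 0 →
      ∀ r ∈ Icc (0:ℝ) 1, g r = 0) ∧
    Tendsto (fun k : ℕ =>
      (∫ r in (0:ℝ)..1, (1 / r) * (Real.sin (k * π * r) / k) ^ 2 * F r) /
      (∫ r in (0:ℝ)..1, ((1 / r) * (Real.sin (k * π * r) / k) ^ 2
        + (deriv (fun s => Real.sin (k * π * s) / k) r) ^ 2)))
      atTop (nhds 0) := by
  constructor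
  · -- definiteness
    intro g hg hg0 hint hzero r hr
    rcases eq_or_lt_of_le hr.1 with h0 | h0
    · rw [← h0]; exact hg0
    by_contra hgr
    -- the integrand vanishes a.e. on (0,1]
    have hae : (fun s => (1 / s) * g s ^ 2 * F s)
        =ᵐ[MeasureTheory.volume.restrict (Ioc 0 1 ∪ Ioc 1 0)] 0 := by
      apply (intervalIntegral.integral_eq_zero_iff_of_nonneg_ae ?_ hint).mp hzero
      have hempty : Ioc (1:ℝ) 0 = ∅ := Set.Ioc_eq_empty (by norm_num)
      rw [hempty, Set.union_empty]
      filter_upwards [MeasureTheory.ae_restrict_mem measurableSet_Ioc] with s hs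
      have hs0 : 0 < s := hs.1
      exact mul_nonneg (mul_nonneg (by positivity) (sq_nonneg _)) (le_of_lt (hFpos s hs))
    have hempty : Ioc (1:ℝ) 0 = ∅ := Set.Ioc_eq_empty (by norm_num)
    rw [hempty, Set.union_empty] at hae
    have hae' : ∀ᵐ s ∂(MeasureTheory.volume : MeasureTheory.Measure ℝ),
        s ∈ Ioc (0:ℝ) 1 → (1 / s) * g s ^ 2 * F s = 0 :=
      (MeasureTheory.ae_restrict_iff' measurableSet_Ioc).mp hae
    rw [MeasureTheory.ae_iff] at hae'
    -- continuity gives a whole interval where g ≠ 0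
    have hcont : ContinuousAt g r := hg.continuous.continuousAt
    have hev : ∀ᶠ s in nhds r, g s ≠ 0 := hcont.eventually_ne hgr
    rw [Metric.eventually_nhds_iff] at hev
    obtain ⟨ε, hε, hball⟩ := hev
    set ε' := min ε r with hε'def
    have hε'pos : 0 < ε' := lt_min hε h0
    have hε'r : ε' ≤ r := min_le_right _ _
    have hε'ε : ε' ≤ ε := min_le_left _ _
    have hsub : Ioo (r - ε') r ⊆
        {a : ℝ | ¬(a ∈ Ioc (0:ℝ) 1 → (1 / a) * g a ^ 2 * F a = 0)} := by
      intro s hs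
      have hs0 : 0 < s := lt_of_le_of_lt (by linarith) hs.1
      have hs1 : s ≤ 1 := le_trans (le_of_lt hs.2) hr.2
      have hgs : g s ≠ 0 := by
        apply hball
        rw [Real.dist_eq, abs_of_nonpos (by linarith [hs.2])]
        linarith [hs.1, hs.2]
      have hpos : 0 < (1 / s) * g s ^ 2 * F s := by
        have h2 : 0 < g s ^ 2 := by positivity
        exact mul_pos (mul_pos (by positivity) h2) (hFpos s ⟨hs0, hs1⟩)
      intro hcontr
      exact (ne_of_gt hpos) (hcontr ⟨hs0, hs1⟩)
    have hnull : MeasureTheory.volume (Ioo (r - ε') r) = 0 :=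
      MeasureTheory.measure_mono_null hsub hae'
    rw [Real.volume_Ioo] at hnull
    rw [ENNReal.ofReal_eq_zero] at hnull
    linarith
  · -- the ratio tends to zero
    obtain ⟨M, hM⟩ := hFbdd
    have hM0 : 0 ≤ M := le_trans (abs_nonneg _) (hM 1 ⟨by norm_num, le_refl 1⟩)
    have hπ := Real.pi_pos
    apply squeeze_zero_norm' (a := fun k : ℕ => (π * M / (π ^ 2 / 2)) / k)
    · filter_upwards [eventually_ge_atTop 1] with k hk
      have hk0 : k ≠ 0 := by omega
      set N := ∫ r in (0:ℝ)..1, (1 / r) * (Real.sin (k * π * r) / k) ^ 2 * F r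
      set D := ∫ r in (0:ℝ)..1, ((1 / r) * (Real.sin (k * π * r) / k) ^ 2
        + (deriv (fun s => Real.sin (k * π * s) / k) r) ^ 2)
      have hD : π ^ 2 / 2 ≤ D := denom_ge k hk0
      have hDpos : 0 < D := lt_of_lt_of_le (by positivity) hD
      have hN : |N| ≤ π * M / k := num_bound F M hM k hk0
      rw [Real.norm_eq_abs, abs_div, abs_of_pos hDpos]
      calc |N| / D ≤ (π * M / k) / (π ^ 2 / 2) :=
            div_le_div₀ (by positivity) hN (by positivity) hD
        _ = (π * M / (π ^ 2 / 2)) / k := div_right_comm _ _ _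
    · exact tendsto_const_div_atTop_nhds_zero_nat _
end
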